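/- Fix real numbers λ_1 < … < λ_{n−1}. The map F sending (μ_1,…,μ_n) to (ξ_1,…,ξ_{n−1},η), where ξ_α = −∏_{p=1}^{n}(μ_p−λ_α) / ∏_{1≤β≤n−1, β≠α}(λ_β−λ_α) and η = Σ_{p=1}^{n} μ_p − Σ_{β=1}^{n−1} λ_β, is a bijection from the open set {(μ_1,…,μ_n) ∈ ℝ^n : μ_1 < λ_1 < μ_2 < λ_2 < … < λ_{n−1} < μ_n} onto the open set {(ξ_1,…,ξ_{n−1},η) ∈ ℝ^n : ξ_1 > 0, …, ξ_{n−1} > 0, η ∈ ℝ}. -/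

import Mathlib

open MeasureTheory Complex Finset

noncomputable section

/-- `mval μ p` is the `p`-th coordinate of `μ : Fin n → ℝ` in 1-based indexing
(meaningful for `1 ≤ p ≤ n`); junk value `0` outside this range. -/
def mval {n : ℕ} (μ : Fin n → ℝ) (p : ℕ) : ℝ :=
  if h : 1 ≤ p ∧ p ≤ n then μ ⟨p - 1, by omega⟩ else 0

/-- The interlacing domain: `μ_1 < λ_1 < μ_2 < λ_2 < … < λ_{n-1} < μ_n`. -/
def Xi (n : ℕ) (lam : ℕ → ℝ) : Set (Fin n → ℝ) :=
  {μ | ∀ α : ℕ, 1 ≤ α → α ≤ n - 1 → mval μ α < lam α ∧ lam α < mval μ (α + 1)}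

/-- `ξ_α = -∏_{p=1}^n (μ_p - λ_α) / ∏_{β ≠ α} (λ_β - λ_α)`. -/
def xiv (n : ℕ) (lam : ℕ → ℝ) (μ : Fin n → ℝ) (α : ℕ) : ℝ :=
  -(∏ p ∈ Icc 1 n, (mval μ p - lam α)) /
    ∏ β ∈ (Icc 1 (n - 1)).erase α, (lam β - lam α)

/-- `η = Σ_p μ_p - Σ_β λ_β`. -/
def etav (n : ℕ) (lam : ℕ → ℝ) (μ : Fin n → ℝ) : ℝ :=
  ∑ p ∈ Icc 1 n, mval μ p - ∑ β ∈ Icc 1 (n - 1), lam β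

/-- The Anderson-type change of variables `μ ↦ (ξ_1, …, ξ_{n-1}, η)`. -/
def Fmap (n : ℕ) (lam : ℕ → ℝ) (μ : Fin n → ℝ) : Fin n → ℝ :=
  fun k => if k.1 + 1 ≤ n - 1 then xiv n lam μ (k.1 + 1) else etav n lam μ

namespace AndersonAux

open Polynomial

lemma mval_eq_of {n : ℕ} (μ : Fin n → ℝ) (p : ℕ) (h1 : 1 ≤ p) (h2 : p ≤ n) :
    mval μ p = μ ⟨p - 1, by omega⟩ := by
  simp [mval, h1, h2]

lemma mval_fin {n : ℕ} (μ : Fin n → ℝ) (i : Fin n) : mval μ (i.1 + 1) = μ i := by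
  rw [mval_eq_of μ (i.1 + 1) (Nat.succ_le_succ (Nat.zero_le _)) i.isLt]
  congr 1

lemma Icc_one_eq_map (n : ℕ) :
    Finset.Icc 1 n = Finset.map ⟨fun i : Fin n => i.1 + 1,
      fun a b h => by simpa [Fin.ext_iff] using h⟩ Finset.univ := by
  ext x
  simp only [Finset.mem_Icc, Finset.mem_map, Finset.mem_univ, true_and,
    Function.Embedding.coeFn_mk]
  constructor
  · rintro ⟨h1, h2⟩; exact ⟨⟨x - 1, by omega⟩, by show x - 1 + 1 = x; omega⟩
  · rintro ⟨i, rfl⟩; have := i.isLt; show 1 ≤ i.1 + 1 ∧ i.1 + 1 ≤ n; omega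

lemma prod_Icc_eq {M : Type*} [CommMonoid M] {n : ℕ} (f : ℕ → M) :
    ∏ p ∈ Finset.Icc 1 n, f p = ∏ i : Fin n, f (i.1 + 1) := by
  rw [Icc_one_eq_map, Finset.prod_map]; rfl

lemma sum_Icc_eq {M : Type*} [AddCommMonoid M] {n : ℕ} (f : ℕ → M) :
    ∑ p ∈ Finset.Icc 1 n, f p = ∑ i : Fin n, f (i.1 + 1) := by
  rw [Icc_one_eq_map, Finset.sum_map]; rfl

section lamsec
variable {n : ℕ} {lam : ℕ → ℝ}
  (hlam : ∀ α : ℕ, 1 ≤ α → α + 1 ≤ n - 1 → lam α < lam (α + 1))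

include hlam

lemma lam_lt (a b : ℕ) (ha : 1 ≤ a) (hab : a < b) (hb : b ≤ n - 1) :
    lam a < lam b := by
  induction b with
  | zero => omega
  | succ m ih =>
    rcases Nat.lt_or_ge a m with h | h
    · exact (ih h (by omega)).trans (hlam m (by omega) (by omega))
    · have : a = m := by omega
      subst this
      exact hlam a ha (by omega)

lemma lam_le (a b : ℕ) (ha : 1 ≤ a) (hab : a ≤ b) (hb : b ≤ n - 1) :
    lam a ≤ lam b := by
  rcases eq_or_lt_of_le hab with rfl | h
  · exact le_rfl
  · exact (lam_lt hlam a b ha h hb).le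

end lamsec

lemma sign_prod_split (s t : Finset ℕ) (f : ℕ → ℝ) (hts : t ⊆ s)
    (hneg : ∀ i ∈ t, f i < 0) (hpos : ∀ i ∈ s \ t, 0 < f i) :
    0 < (-1 : ℝ) ^ t.card * ∏ i ∈ s, f i := by
  rw [← Finset.prod_sdiff hts]
  have h1 : ∏ i ∈ t, (-f i) = (-1 : ℝ) ^ t.card * ∏ i ∈ t, f i := by
    rw [show (∏ i ∈ t, (-f i)) = ∏ i ∈ t, ((-1) * f i) by simp,
      Finset.prod_mul_distrib, Finset.prod_const]
  have h2 : (0:ℝ) < (∏ i ∈ s \ t, f i) * ∏ i ∈ t, (-f i) :=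
    mul_pos (Finset.prod_pos hpos) (Finset.prod_pos (fun i hi => by
      simpa using hneg i hi))
  have h3 : ((-1:ℝ) ^ t.card) * ((-1:ℝ) ^ t.card) = 1 := by
    rw [← mul_pow]; norm_num
  calc (0:ℝ) < (∏ i ∈ s \ t, f i) * ∏ i ∈ t, (-f i) := h2
    _ = (-1 : ℝ) ^ t.card * ((∏ i ∈ s \ t, f i) * ∏ i ∈ t, f i) := by
        rw [h1]; ring

section xisec
variable {n : ℕ} {lam : ℕ → ℝ} {μ : Fin n → ℝ}

lemma mval_lt_lam (hlam : ∀ α : ℕ, 1 ≤ α → α + 1 ≤ n - 1 → lam α < lam (α + 1))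
    (hμ : μ ∈ Xi n lam) {p α : ℕ} (h1 : 1 ≤ p) (h2 : p ≤ α) (h3 : α ≤ n - 1) :
    mval μ p < lam α :=
  lt_of_lt_of_le (hμ p h1 (by omega)).1 (lam_le hlam p α h1 h2 h3)

lemma lam_lt_mval (hlam : ∀ α : ℕ, 1 ≤ α → α + 1 ≤ n - 1 → lam α < lam (α + 1))
    (hμ : μ ∈ Xi n lam) {α p : ℕ} (h1 : 1 ≤ α) (h2 : α < p) (h3 : p ≤ n) :
    lam α < mval μ p := by
  have h4 : lam (p-1) < mval μ (p - 1 + 1) := (hμ (p-1) (by omega) (by omega)).2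
  have h5 : lam α ≤ lam (p-1) := lam_le hlam α (p-1) h1 (by omega) (by omega)
  have h6 : p - 1 + 1 = p := by omega
  rw [h6] at h4
  exact lt_of_le_of_lt h5 h4

lemma xiv_num_sign (hlam : ∀ α : ℕ, 1 ≤ α → α + 1 ≤ n - 1 → lam α < lam (α + 1))
    (hμ : μ ∈ Xi n lam) {α : ℕ} (h1 : 1 ≤ α) (h2 : α ≤ n - 1) :
    0 < (-1 : ℝ) ^ α * ∏ p ∈ Icc 1 n, (mval μ p - lam α) := by
  have := sign_prod_split (Icc 1 n) (Icc 1 α) (fun p => mval μ p - lam α)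
    (Finset.Icc_subset_Icc le_rfl (by omega))
    (fun p hp => by
      rw [Finset.mem_Icc] at hp
      exact sub_neg.mpr (mval_lt_lam hlam hμ hp.1 hp.2 h2))
    (fun p hp => by
      rw [Finset.mem_sdiff, Finset.mem_Icc, Finset.mem_Icc] at hp
      exact sub_pos.mpr (lam_lt_mval hlam hμ h1 (by omega) (by omega)))
  simpa [Nat.card_Icc] using this

lemma xiv_den_sign (hlam : ∀ α : ℕ, 1 ≤ α → α + 1 ≤ n - 1 → lam α < lam (α + 1))
    {α : ℕ} (h1 : 1 ≤ α) (h2 : α ≤ n - 1) :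
    0 < (-1 : ℝ) ^ (α - 1) * ∏ β ∈ (Icc 1 (n - 1)).erase α, (lam β - lam α) := by
  have := sign_prod_split ((Icc 1 (n - 1)).erase α) (Icc 1 (α - 1))
    (fun β => lam β - lam α)
    (fun β hβ => by
      rw [Finset.mem_Icc] at hβ
      rw [Finset.mem_erase, Finset.mem_Icc]
      omega)
    (fun β hβ => by
      rw [Finset.mem_Icc] at hβ
      exact sub_neg.mpr (lam_lt hlam β α hβ.1 (by omega) h2))
    (fun β hβ => by
      rw [Finset.mem_sdiff, Finset.mem_erase, Finset.mem_Icc, Finset.mem_Icc] at hβ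
      exact sub_pos.mpr (lam_lt hlam α β h1 (by omega) (by omega)))
  simpa [Nat.card_Icc] using this

lemma xiv_den_ne (hlam : ∀ α : ℕ, 1 ≤ α → α + 1 ≤ n - 1 → lam α < lam (α + 1))
    {α : ℕ} (h1 : 1 ≤ α) (h2 : α ≤ n - 1) :
    (∏ β ∈ (Icc 1 (n - 1)).erase α, (lam β - lam α)) ≠ 0 := by
  intro h
  have := xiv_den_sign hlam h1 h2
  rw [h] at this
  simp at this

lemma xiv_pos (hlam : ∀ α : ℕ, 1 ≤ α → α + 1 ≤ n - 1 → lam α < lam (α + 1))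
    (hμ : μ ∈ Xi n lam) {α : ℕ} (h1 : 1 ≤ α) (h2 : α ≤ n - 1) :
    0 < xiv n lam μ α := by
  set N := ∏ p ∈ Icc 1 n, (mval μ p - lam α) with hN
  set D := ∏ β ∈ (Icc 1 (n - 1)).erase α, (lam β - lam α) with hD
  have ha : 0 < (-1 : ℝ) ^ α * N := xiv_num_sign hlam hμ h1 h2
  have hb : 0 < (-1 : ℝ) ^ (α - 1) * D := xiv_den_sign hlam h1 h2
  have hDne : D ≠ 0 := xiv_den_ne hlam h1 h2
  have hpow : (-1 : ℝ) ^ α = -(-1 : ℝ) ^ (α - 1) := by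
    conv_lhs => rw [show α = (α - 1) + 1 from by omega]
    rw [pow_succ]; ring
  have e1 : xiv n lam μ α = ((-1 : ℝ) ^ α * N) / ((-1 : ℝ) ^ (α - 1) * D) := by
    rw [xiv, ← hN, ← hD, div_eq_div_iff hDne (by
      exact mul_ne_zero (pow_ne_zero _ (by norm_num)) hDne), hpow]
    ring
  rw [e1]
  exact div_pos ha hb

end xisec

section polysec
open Polynomial

/-- `Pm μ = ∏ i (X - C (μ i))`. -/
def Pm {n : ℕ} (μ : Fin n → ℝ) : Polynomial ℝ :=
  ∏ i : Fin n, (X - C (μ i))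

lemma Pm_monic {n : ℕ} (μ : Fin n → ℝ) : (Pm μ).Monic :=
  monic_prod_of_monic _ _ (fun i _ => monic_X_sub_C _)

lemma Pm_natDegree {n : ℕ} (μ : Fin n → ℝ) : (Pm μ).natDegree = n := by
  rw [Pm, natDegree_prod_of_monic _ _ (fun i _ => monic_X_sub_C _)]
  simp

lemma Pm_eval {n : ℕ} (μ : Fin n → ℝ) (x : ℝ) :
    (Pm μ).eval x = ∏ i : Fin n, (x - μ i) := by
  rw [Pm, eval_prod]
  simp

lemma Pm_nextCoeff {n : ℕ} (μ : Fin n → ℝ) :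
    (Pm μ).nextCoeff = -∑ i : Fin n, μ i :=
  prod_X_sub_C_nextCoeff μ

lemma Pm_roots {n : ℕ} (μ : Fin n → ℝ) :
    (Pm μ).roots = Multiset.map μ Finset.univ.val := by
  have : Pm μ = (Multiset.map (fun a => X - C a) (Multiset.map μ Finset.univ.val)).prod := by
    rw [Multiset.map_map, Pm, Finset.prod_eq_multiset_prod]
    rfl
  rw [this, roots_multiset_prod_X_sub_C]

lemma strictMono_eq_of_multiset {n : ℕ} {μ μ' : Fin n → ℝ}
    (h : StrictMono μ) (h' : StrictMono μ')
    (heq : Multiset.map μ Finset.univ.val = Multiset.map μ' Finset.univ.val) :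
    μ = μ' := by
  have huniv : (Finset.univ : Finset (Fin n)).val = ↑(List.finRange n) := by
    rw [Fin.univ_def]
  rw [huniv] at heq
  have hperm : (List.map μ (List.finRange n)).Perm (List.map μ' (List.finRange n)) := by
    rwa [← Multiset.coe_eq_coe, ← Multiset.map_coe, ← Multiset.map_coe]
  have hs : (List.map μ (List.finRange n)).Pairwise (· < ·) :=
    (List.pairwise_map).mpr ((List.pairwise_lt_finRange n).imp (fun hab => h hab))
  have hs' : (List.map μ' (List.finRange n)).Pairwise (· < ·) :=
    (List.pairwise_map).mpr ((List.pairwise_lt_finRange n).imp (fun hab => h' hab))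
  have hl : List.map μ (List.finRange n) = List.map μ' (List.finRange n) :=
    List.Perm.eq_of_pairwise (fun _ _ _ _ h1 h2 => absurd (h1.trans h2) (lt_irrefl _)) hs hs' hperm
  funext i
  have h1 := congrArg (fun l : List ℝ => l[i.1]?) hl
  simp at h1
  assumption

lemma exists_root_between (P : Polynomial ℝ) {a b : ℝ} (hab : a < b)
    (h : P.eval a * P.eval b < 0) : ∃ x ∈ Set.Ioo a b, P.eval x = 0 := by
  have hc : ContinuousOn (fun x => P.eval x) (Set.Icc a b) := P.continuousOn
  rcases lt_trichotomy (P.eval a) 0 with hA | hA | hA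
  · have hB : 0 < P.eval b := by nlinarith
    have := intermediate_value_Ioo hab.le hc
    obtain ⟨x, hx, hfx⟩ := this (Set.mem_Ioo.mpr ⟨hA, hB⟩)
    exact ⟨x, hx, hfx⟩
  · rw [hA] at h; simp at h
  · have hB : P.eval b < 0 := by nlinarith
    have := intermediate_value_Ioo' hab.le hc
    obtain ⟨x, hx, hfx⟩ := this (Set.mem_Ioo.mpr ⟨hB, hA⟩)
    exact ⟨x, hx, hfx⟩

lemma exists_pos_tail (P : Polynomial ℝ) (hm : P.Monic) (hd : 0 < P.natDegree) (r : ℝ) :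
    ∃ b, r < b ∧ 0 < P.eval b := by
  have ht := P.tendsto_atTop_of_leadingCoeff_nonneg
    (natDegree_pos_iff_degree_pos.mp hd) (by rw [hm.leadingCoeff]; norm_num)
  have h1 := ht.eventually_gt_atTop 0
  have h2 := Filter.eventually_gt_atTop r
  obtain ⟨x, hx1, hx2⟩ := (h1.and h2).exists
  exact ⟨x, hx2, hx1⟩

lemma exists_head (P : Polynomial ℝ) (hm : P.Monic) (hd : 0 < P.natDegree) (r : ℝ) :
    ∃ a, a < r ∧ 0 < (-1 : ℝ) ^ P.natDegree * P.eval a := by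
  set R := C ((-1 : ℝ) ^ P.natDegree) * P.comp (-X) with hR
  have hPne : P ≠ 0 := hm.ne_zero
  have hnc : (P.comp (-X)).natDegree = P.natDegree := by
    rw [natDegree_comp, natDegree_neg, natDegree_X, mul_one]
  have hlc : (P.comp (-X)).leadingCoeff = (-1 : ℝ) ^ P.natDegree := by
    rw [leadingCoeff_comp (by rw [natDegree_neg, natDegree_X]; norm_num), hm.leadingCoeff,
      leadingCoeff_neg, leadingCoeff_X]
    norm_num
  have hRlc : R.leadingCoeff = 1 := by
    rw [hR, leadingCoeff_mul, leadingCoeff_C, hlc, ← mul_pow]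
    norm_num
  have hRne : R ≠ 0 := by
    intro h; rw [h] at hRlc; simp at hRlc
  have hRd : R.natDegree = P.natDegree := by
    rw [hR, natDegree_C_mul (pow_ne_zero _ (by norm_num)), hnc]
  have ht := R.tendsto_atTop_of_leadingCoeff_nonneg
    (natDegree_pos_iff_degree_pos.mp (by rw [hRd]; exact hd)) (by rw [hRlc]; norm_num)
  have h1 := ht.eventually_gt_atTop 0
  have h2 := Filter.eventually_gt_atTop (-r)
  obtain ⟨x, hx1, hx2⟩ := (h1.and h2).exists
  refine ⟨-x, by linarith, ?_⟩
  have : R.eval x = (-1 : ℝ) ^ P.natDegree * P.eval (-x) := by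
    rw [hR, eval_mul, eval_C, eval_comp]
    simp
  rwa [this] at hx1

end polysec

section injsec
open Polynomial

variable {n : ℕ} {lam : ℕ → ℝ}

lemma neg_prod_fin {m : ℕ} (g : Fin m → ℝ) :
    ∏ i : Fin m, (-g i) = (-1 : ℝ) ^ m * ∏ i : Fin m, g i := by
  rw [show (∏ i : Fin m, (-g i)) = ∏ i : Fin m, ((-1) * g i) by simp,
    Finset.prod_mul_distrib, Finset.prod_const]
  simp

lemma prod_Icc_mval (μ : Fin n → ℝ) (x : ℝ) :
    ∏ p ∈ Icc 1 n, (mval μ p - x) = (-1 : ℝ) ^ n * (Pm μ).eval x := by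
  rw [prod_Icc_eq, Pm_eval]
  calc ∏ i : Fin n, (mval μ (i.1 + 1) - x) = ∏ i : Fin n, (μ i - x) := by
        refine Finset.prod_congr rfl fun i _ => by rw [mval_fin]
    _ = ∏ i : Fin n, (-(x - μ i)) := by refine Finset.prod_congr rfl fun i _ => by ring
    _ = (-1 : ℝ) ^ n * ∏ i : Fin n, (x - μ i) := by
        rw [neg_prod_fin]

lemma strictMono_of_Xi (hlam : ∀ α : ℕ, 1 ≤ α → α + 1 ≤ n - 1 → lam α < lam (α + 1))
    {μ : Fin n → ℝ} (hμ : μ ∈ Xi n lam) : StrictMono μ := by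
  intro i j hij
  rw [← mval_fin μ i, ← mval_fin μ j]
  have hj : j.1 < n := j.isLt
  have h1 : mval μ (i.1 + 1) < lam j.1 :=
    mval_lt_lam hlam hμ (by omega) (by exact_mod_cast hij) (by omega)
  have h2 : lam j.1 < mval μ (j.1 + 1) :=
    lam_lt_mval hlam hμ (by omega) (by omega) (by omega)
  exact h1.trans h2

lemma lam_injOn (hlam : ∀ α : ℕ, 1 ≤ α → α + 1 ≤ n - 1 → lam α < lam (α + 1)) :
    Set.InjOn lam (Icc 1 (n - 1)) := by
  intro a ha b hb hab
  simp only [Finset.coe_Icc, Set.mem_Icc] at ha hb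
  rcases lt_trichotomy a b with h | h | h
  · exact absurd hab (ne_of_lt (lam_lt hlam a b ha.1 h hb.2))
  · exact h
  · exact absurd hab.symm (ne_of_lt (lam_lt hlam b a hb.1 h ha.2))

lemma anderson_injOn (hn : 1 ≤ n)
    (hlam : ∀ α : ℕ, 1 ≤ α → α + 1 ≤ n - 1 → lam α < lam (α + 1)) :
    Set.InjOn (Fmap n lam) (Xi n lam) := by
  intro μ hμ μ' hμ' h
  rcases Nat.lt_or_ge n 2 with hn2 | hn2
  · -- n = 1
    interval_cases n
    funext k
    have h0 := congrFun h k
    simp only [Fmap] at h0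
    rw [if_neg (by omega), if_neg (by omega)] at h0
    simp only [etav] at h0
    have e1 : ∑ p ∈ Icc 1 1, mval μ p = μ k := by
      rw [sum_Icc_eq, Fin.sum_univ_one, mval_fin]
      exact congrArg μ (Subsingleton.elim _ _)
    have e1' : ∑ p ∈ Icc 1 1, mval μ' p = μ' k := by
      rw [sum_Icc_eq, Fin.sum_univ_one, mval_fin]
      exact congrArg μ' (Subsingleton.elim _ _)
    rw [e1, e1'] at h0
    linarith
  · -- n ≥ 2
    have hξ : ∀ α : ℕ, 1 ≤ α → α ≤ n - 1 → xiv n lam μ α = xiv n lam μ' α := by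
      intro α h1 h2
      have hc := congrFun h ⟨α - 1, by omega⟩
      simp only [Fmap] at hc
      have e : (α - 1) + 1 = α := by omega
      rw [if_pos (by omega), if_pos (by omega)] at hc
      rwa [e] at hc
    have hη : etav n lam μ = etav n lam μ' := by
      have hc := congrFun h ⟨n - 1, by omega⟩
      simp only [Fmap] at hc
      rwa [if_neg (by omega), if_neg (by omega)] at hc
    have heval : ∀ α : ℕ, 1 ≤ α → α ≤ n - 1 →
        (Pm μ).eval (lam α) = (Pm μ').eval (lam α) := by
      intro α h1 h2
      have hD := xiv_den_ne (n := n) hlam h1 h2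
      have := hξ α h1 h2
      rw [xiv, xiv] at this
      rw [div_eq_div_iff hD hD] at this
      have h3 := mul_right_cancel₀ hD this
      have hN : (∏ p ∈ Icc 1 n, (mval μ p - lam α)) =
          (∏ p ∈ Icc 1 n, (mval μ' p - lam α)) := by linarith
      rw [prod_Icc_mval, prod_Icc_mval] at hN
      have hp : ((-1 : ℝ) ^ n) ≠ 0 := pow_ne_zero _ (by norm_num)
      exact mul_left_cancel₀ hp hN
    have hsum : ∑ i : Fin n, μ i = ∑ i : Fin n, μ' i := by
      have := hη
      rw [etav, etav, sub_left_inj, sum_Icc_eq, sum_Icc_eq] at this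
      calc ∑ i : Fin n, μ i = ∑ i : Fin n, mval μ (i.1 + 1) :=
            Finset.sum_congr rfl fun i _ => (mval_fin μ i).symm
        _ = ∑ i : Fin n, mval μ' (i.1 + 1) := this
        _ = ∑ i : Fin n, μ' i := Finset.sum_congr rfl fun i _ => mval_fin μ' i
    -- the difference polynomial
    set D := Pm μ - Pm μ' with hD
    have hDdeg : D.natDegree ≤ n - 2 := by
      rw [natDegree_le_iff_coeff_eq_zero]
      intro m hm
      rw [hD, coeff_sub]
      rcases eq_or_lt_of_le (show n - 1 ≤ m by omega) with hm1 | hm1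
      · -- m = n - 1 : next coefficients agree
        have e1 : (Pm μ).coeff (n - 1) = -∑ i : Fin n, μ i := by
          rw [← Pm_nextCoeff, nextCoeff_of_natDegree_pos (by rw [Pm_natDegree]; omega),
            Pm_natDegree]
        have e1' : (Pm μ').coeff (n - 1) = -∑ i : Fin n, μ' i := by
          rw [← Pm_nextCoeff, nextCoeff_of_natDegree_pos (by rw [Pm_natDegree]; omega),
            Pm_natDegree]
        rw [← hm1, e1, e1', hsum]
        ring
      · rcases eq_or_lt_of_le (show n ≤ m by omega) with hm2 | hm2
        · rw [← hm2]
          have c1 : (Pm μ).coeff n = 1 := by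
            have := (Pm_monic μ).coeff_natDegree
            rwa [Pm_natDegree] at this
          have c1' : (Pm μ').coeff n = 1 := by
            have := (Pm_monic μ').coeff_natDegree
            rwa [Pm_natDegree] at this
          rw [c1, c1']; ring
        · rw [coeff_eq_zero_of_natDegree_lt (by rw [Pm_natDegree]; omega),
            coeff_eq_zero_of_natDegree_lt (by rw [Pm_natDegree]; omega)]
          ring
    have hDzero : D = 0 := by
      apply eq_zero_of_natDegree_lt_card_of_eval_eq_zero' D (Finset.image lam (Icc 1 (n - 1)))
      · intro x hx
        rw [Finset.mem_image] at hx
        obtain ⟨α, hα, rfl⟩ := hx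
        rw [Finset.mem_Icc] at hα
        rw [hD, eval_sub, heval α hα.1 hα.2]
        ring
      · rw [Finset.card_image_of_injOn (by exact_mod_cast lam_injOn hlam), Nat.card_Icc]
        omega
    have hPm : Pm μ = Pm μ' := by
      have := sub_eq_zero.mp hDzero
      exact this
    have hroots : Multiset.map μ Finset.univ.val = Multiset.map μ' Finset.univ.val := by
      rw [← Pm_roots, ← Pm_roots, hPm]
    exact strictMono_eq_of_multiset (strictMono_of_Xi hlam hμ) (strictMono_of_Xi hlam hμ') hroots

end injsec

section surjsec
open Polynomial

variable {n : ℕ} {lam : ℕ → ℝ}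

lemma neg_prod_gen {ι : Type*} (s : Finset ι) (g : ι → ℝ) :
    ∏ i ∈ s, (-g i) = (-1 : ℝ) ^ s.card * ∏ i ∈ s, g i := by
  rw [show (∏ i ∈ s, (-g i)) = ∏ i ∈ s, ((-1) * g i) by simp,
    Finset.prod_mul_distrib, Finset.prod_const]

lemma anderson_surjOn (hn : 2 ≤ n)
    (hlam : ∀ α : ℕ, 1 ≤ α → α + 1 ≤ n - 1 → lam α < lam (α + 1))
    (v : Fin n → ℝ) (hv : ∀ α : ℕ, 1 ≤ α → α ≤ n - 1 → 0 < mval v α) :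
    ∃ μ ∈ Xi n lam, Fmap n lam μ = v := by
  classical
  set ξ : ℕ → ℝ := fun α => mval v α with hξdef
  set η : ℝ := mval v n with hηdef
  set Q : Polynomial ℝ := ∏ β ∈ Icc 1 (n-1), (X - C (lam β)) with hQdef
  set Qe : ℕ → Polynomial ℝ :=
    fun α => ∏ β ∈ (Icc 1 (n-1)).erase α, (X - C (lam β)) with hQedef
  set S : Polynomial ℝ := ∑ α ∈ Icc 1 (n-1), C (ξ α) * Qe α with hSdef
  set A : Polynomial ℝ := (X - C η) * Q with hAdef
  set P : Polynomial ℝ := A - S with hPdef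
  set E : ℕ → ℝ := fun α => ∏ β ∈ (Icc 1 (n-1)).erase α, (lam α - lam β) with hEdef
  -- basic degree facts
  have hQm : Q.Monic := monic_prod_of_monic _ _ (fun i _ => monic_X_sub_C _)
  have hQd : Q.natDegree = n - 1 := by
    rw [hQdef, natDegree_prod_of_monic _ _ (fun i _ => monic_X_sub_C _)]
    simp [Nat.card_Icc]
  have hAm : A.Monic := (monic_X_sub_C η).mul hQm
  have hAd : A.natDegree = n := by
    rw [hAdef, Polynomial.Monic.natDegree_mul (monic_X_sub_C η) hQm, natDegree_X_sub_C, hQd]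
    omega
  have hQed : ∀ α ∈ Icc 1 (n-1), (Qe α).natDegree = n - 2 := by
    intro α hα
    rw [hQedef]
    simp only
    rw [natDegree_prod_of_monic _ _ (fun i _ => monic_X_sub_C _)]
    simp [Finset.card_erase_of_mem hα, Nat.card_Icc]
    omega
  have hSd : S.natDegree ≤ n - 2 := by
    rw [hSdef]
    apply natDegree_sum_le_of_forall_le
    intro α hα
    exact (natDegree_C_mul_le _ _).trans (le_of_eq (hQed α hα))
  have hSdeg : S.degree < (n : WithBot ℕ) := by
    calc S.degree ≤ (S.natDegree : WithBot ℕ) := degree_le_natDegree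
      _ ≤ ((n - 2 : ℕ) : WithBot ℕ) := by exact_mod_cast hSd
      _ < (n : WithBot ℕ) := by exact_mod_cast (by omega : n - 2 < n)
  have hAdeg : A.degree = (n : WithBot ℕ) := by
    rw [degree_eq_natDegree hAm.ne_zero, hAd]
  have hPm : P.Monic := by
    rw [hPdef, sub_eq_add_neg]
    exact hAm.add_of_left (by rw [degree_neg, hAdeg]; exact hSdeg)
  have hPdeg : P.degree = (n : WithBot ℕ) := by
    rw [hPdef, sub_eq_add_neg, degree_add_eq_left_of_degree_lt (by rw [degree_neg, hAdeg]; exact hSdeg), hAdeg]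
  have hPd : P.natDegree = n := natDegree_eq_of_degree_eq_some hPdeg
  -- evaluation at the lam's
  have hQeval : ∀ α : ℕ, 1 ≤ α → α ≤ n - 1 → Q.eval (lam α) = 0 := by
    intro α h1 h2
    rw [hQdef, eval_prod]
    exact Finset.prod_eq_zero (Finset.mem_Icc.mpr ⟨h1, h2⟩) (by simp)
  have hQeeval : ∀ α : ℕ, (Qe α).eval (lam α) = E α := by
    intro α
    rw [hQedef, hEdef]
    simp only
    rw [eval_prod]
    exact Finset.prod_congr rfl fun β _ => by simp
  have heval : ∀ α : ℕ, 1 ≤ α → α ≤ n - 1 → P.eval (lam α) = -(ξ α) * E α := by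
    intro α h1 h2
    rw [hPdef, eval_sub, hAdef, eval_mul, hQeval α h1 h2, mul_zero, hSdef, eval_finset_sum]
    rw [Finset.sum_eq_single α]
    · rw [eval_mul, eval_C, hQeeval]
      ring
    · intro β hβ hβα
      rw [eval_mul, eval_C, hQedef]
      simp only
      rw [eval_prod]
      rw [Finset.prod_eq_zero (Finset.mem_erase.mpr ⟨fun h => hβα h.symm, Finset.mem_Icc.mpr ⟨h1, h2⟩⟩) (by simp)]
      ring
    · intro hα
      exact absurd (Finset.mem_Icc.mpr ⟨h1, h2⟩) hα
  have hEsign : ∀ α : ℕ, 1 ≤ α → α ≤ n - 1 →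
      0 < (-1 : ℝ) ^ (n - 1 - α) * E α := by
    intro α h1 h2
    have := sign_prod_split ((Icc 1 (n-1)).erase α) (Icc (α+1) (n-1))
      (fun β => lam α - lam β)
      (fun β hβ => by
        rw [Finset.mem_Icc] at hβ
        rw [Finset.mem_erase, Finset.mem_Icc]
        omega)
      (fun β hβ => by
        rw [Finset.mem_Icc] at hβ
        exact sub_neg.mpr (lam_lt hlam α β h1 (by omega) hβ.2))
      (fun β hβ => by
        rw [Finset.mem_sdiff, Finset.mem_erase, Finset.mem_Icc, Finset.mem_Icc] at hβ
        exact sub_pos.mpr (lam_lt hlam β α (by omega) (by omega) h2))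
    rw [Nat.card_Icc] at this
    rw [hEdef]
    simpa [show n - 1 + 1 - (α + 1) = n - 1 - α by omega] using this
  have hEne : ∀ α : ℕ, 1 ≤ α → α ≤ n - 1 → E α ≠ 0 := by
    intro α h1 h2 h
    have := hEsign α h1 h2
    rw [h] at this
    simp at this
  have hmidsign : ∀ α : ℕ, 1 ≤ α → α ≤ n - 1 →
      0 < (-1 : ℝ) ^ (n - α) * P.eval (lam α) := by
    intro α h1 h2
    have hE := hEsign α h1 h2
    have hp : 0 < ξ α := hv α h1 h2
    have hpow : (-1 : ℝ) ^ (n - α) = -(-1 : ℝ) ^ (n - 1 - α) := by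
      conv_lhs => rw [show n - α = (n - 1 - α) + 1 from by omega]
      rw [pow_succ]; ring
    rw [heval α h1 h2, hpow]
    nlinarith [mul_pos hp hE]
  -- endpoints
  obtain ⟨b, hb1, hb2⟩ := exists_pos_tail P hPm (by rw [hPd]; omega) (lam (n-1))
  obtain ⟨a, ha1, ha2⟩ := exists_head P hPm (by rw [hPd]; omega) (lam 1)
  rw [hPd] at ha2
  -- the partition points
  set xpt : ℕ → ℝ := fun k => if k = 0 then a else if k ≤ n - 1 then lam k else b
    with hxdef
  have hx0 : xpt 0 = a := by simp [hxdef]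
  have hxval : ∀ k : ℕ, 1 ≤ k → k ≤ n - 1 → xpt k = lam k := by
    intro k h1 h2
    simp only [hxdef]
    rw [if_neg (by omega), if_pos h2]
  have hxn : xpt n = b := by
    simp only [hxdef]
    rw [if_neg (by omega), if_neg (by omega)]
  have hxadj : ∀ k : ℕ, k < n → xpt k < xpt (k + 1) := by
    intro k hk
    rcases Nat.eq_zero_or_pos k with rfl | hk0
    · rw [hx0, hxval 1 le_rfl (by omega)]
      exact ha1
    · rcases Nat.lt_or_ge (k + 1) n with hk1 | hk1
      · rw [hxval k hk0 (by omega), hxval (k + 1) (by omega) (by omega)]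
        exact hlam k hk0 (by omega)
      · have hkn : k = n - 1 := by omega
        rw [hxval k hk0 (by omega), show k + 1 = n from by omega, hxn, hkn]
        exact hb1
  have hxsign : ∀ k : ℕ, k ≤ n → 0 < (-1 : ℝ) ^ (n - k) * P.eval (xpt k) := by
    intro k hk
    rcases Nat.eq_zero_or_pos k with rfl | hk0
    · rw [hx0]
      simpa using ha2
    · rcases Nat.lt_or_ge k n with hk1 | hk1
      · rw [hxval k hk0 (by omega)]
        exact hmidsign k hk0 (by omega)
      · have hkn : k = n := by omega
        rw [hkn, hxn]
        simpa using hb2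
  have hroots : ∀ k : Fin n, ∃ x, x ∈ Set.Ioo (xpt k.1) (xpt (k.1 + 1)) ∧ P.eval x = 0 := by
    intro k
    have h1 := hxsign k.1 (le_of_lt k.isLt)
    have h2 := hxsign (k.1 + 1) k.isLt
    have hpow : (-1 : ℝ) ^ (n - k.1) = -(-1 : ℝ) ^ (n - (k.1 + 1)) := by
      conv_lhs => rw [show n - k.1 = (n - (k.1 + 1)) + 1 from by omega]
      rw [pow_succ]; ring
    rw [hpow] at h1
    have hsq : (-1 : ℝ) ^ (n - (k.1 + 1)) * (-1 : ℝ) ^ (n - (k.1 + 1)) = 1 := by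
      rw [← mul_pow]; norm_num
    have hprod : P.eval (xpt k.1) * P.eval (xpt (k.1 + 1)) < 0 := by
      nlinarith [mul_pos h1 h2]
    obtain ⟨x, hx, hfx⟩ := exists_root_between P (hxadj k.1 k.isLt) hprod
    exact ⟨x, hx, hfx⟩
  choose μf hμmem hμroot using hroots
  -- xpt is monotone
  have hxmono : ∀ j k : ℕ, j < k → k ≤ n → xpt j < xpt k := by
    intro j k hjk hkn
    induction k with
    | zero => omega
    | succ m ih =>
      rcases Nat.lt_or_ge j m with h | h
      · exact (ih h (by omega)).trans (hxadj m (by omega))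
      · have : j = m := by omega
        subst this
        exact hxadj j (by omega)
  have hsm : StrictMono μf := by
    intro i j hij
    have h1 : μf i < xpt (i.1 + 1) := (hμmem i).2
    have h2 : xpt j.1 < μf j := (hμmem j).1
    rcases eq_or_lt_of_le (show i.1 + 1 ≤ j.1 from hij) with h | h
    · rw [h] at h1; exact h1.trans h2
    · exact h1.trans ((hxmono _ _ h (le_of_lt j.isLt)).trans h2)
  -- μf is in Xi
  have hXi : μf ∈ Xi n lam := by
    intro α h1 h2
    constructor
    · rw [mval_eq_of μf α h1 (by omega)]
      have h3 := (hμmem ⟨α - 1, by omega⟩).2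
      simp only at h3
      rw [show α - 1 + 1 = α from by omega, hxval α h1 h2] at h3
      exact h3
    · rw [mval_eq_of μf (α + 1) (by omega) (by omega)]
      have h3 := (hμmem ⟨α, by omega⟩).1
      simp only at h3
      rw [hxval α h1 h2] at h3
      have e : (⟨α + 1 - 1, by omega⟩ : Fin n) = ⟨α, by omega⟩ :=
        Fin.ext (by show α + 1 - 1 = α; omega)
      rw [e]
      exact h3
  -- P equals the root polynomial
  have hPeq : P = Pm μf := by
    have hsub : P - Pm μf = 0 := by
      apply eq_zero_of_natDegree_lt_card_of_eval_eq_zero _ hsm.injective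
      · intro i
        rw [eval_sub, hμroot i, Pm_eval]
        rw [Finset.prod_eq_zero (Finset.mem_univ i) (by ring)]
        ring
      · rw [Fintype.card_fin]
        by_cases h0 : P - Pm μf = 0
        · rw [h0]; simp; omega
        · rw [natDegree_lt_iff_degree_lt h0]
          have : (P - Pm μf).degree < P.degree := by
            apply degree_sub_lt
            · rw [degree_eq_natDegree hPm.ne_zero, degree_eq_natDegree (Pm_monic μf).ne_zero,
                hPd, Pm_natDegree]
            · exact hPm.ne_zero
            · rw [hPm.leadingCoeff, (Pm_monic μf).leadingCoeff]
          rwa [hPdeg] at this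
    exact sub_eq_zero.mp hsub
  refine ⟨μf, hXi, ?_⟩
  funext k
  by_cases hk : k.1 + 1 ≤ n - 1
  · -- a ξ coordinate
    simp only [Fmap]
    rw [if_pos hk]
    set α := k.1 + 1 with hαdef
    have h1 : 1 ≤ α := by omega
    have hmem : α ∈ Icc 1 (n - 1) := Finset.mem_Icc.mpr ⟨h1, hk⟩
    have hNum : ∏ p ∈ Icc 1 n, (mval μf p - lam α) = (-1 : ℝ) ^ n * (-(ξ α) * E α) := by
      rw [prod_Icc_mval, ← hPeq, heval α h1 hk]
    have hcard : ((Icc 1 (n - 1)).erase α).card = n - 2 := by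
      rw [Finset.card_erase_of_mem hmem, Nat.card_Icc]
      omega
    have hDrel : ∏ β ∈ (Icc 1 (n - 1)).erase α, (lam β - lam α) =
        (-1 : ℝ) ^ (n - 2) * E α := by
      calc ∏ β ∈ (Icc 1 (n - 1)).erase α, (lam β - lam α)
          = ∏ β ∈ (Icc 1 (n - 1)).erase α, (-(lam α - lam β)) :=
            Finset.prod_congr rfl fun β _ => by ring
        _ = (-1 : ℝ) ^ ((Icc 1 (n - 1)).erase α).card *
              ∏ β ∈ (Icc 1 (n - 1)).erase α, (lam α - lam β) := neg_prod_gen _ _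
        _ = (-1 : ℝ) ^ (n - 2) * E α := by rw [hcard, hEdef]
    have hpow : (-1 : ℝ) ^ n = (-1 : ℝ) ^ (n - 2) := by
      conv_lhs => rw [show n = (n - 2) + 2 from by omega]
      rw [pow_add]
      norm_num
    have hE := hEne α h1 hk
    rw [xiv, hNum, hDrel, hpow]
    have hr : -((-1 : ℝ) ^ (n - 2) * (-(ξ α) * E α)) = ξ α * ((-1 : ℝ) ^ (n - 2) * E α) := by
      ring
    rw [hr, mul_div_assoc, div_self (mul_ne_zero (pow_ne_zero _ (by norm_num)) hE), mul_one]
    simp only [hξdef]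
    exact mval_fin v k
  · -- the η coordinate
    have hk1 : k.1 = n - 1 := by have := k.isLt; omega
    simp only [Fmap]
    rw [if_neg hk]
    have e1 : P.nextCoeff = -∑ i : Fin n, μf i := by
      rw [hPeq]; exact Pm_nextCoeff μf
    have e2 : P.nextCoeff = -η + -(∑ β ∈ Icc 1 (n - 1), lam β) := by
      rw [nextCoeff_of_natDegree_pos (by rw [hPd]; omega), hPd]
      rw [hPdef, coeff_sub,
        coeff_eq_zero_of_natDegree_lt (lt_of_le_of_lt hSd (by omega : n - 2 < n - 1)),
        sub_zero]
      have e3 : A.coeff (n - 1) = A.nextCoeff := by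
        rw [nextCoeff_of_natDegree_pos (by rw [hAd]; omega), hAd]
      rw [e3, hAdef, (monic_X_sub_C η).nextCoeff_mul hQm, nextCoeff_X_sub_C, hQdef,
        prod_X_sub_C_nextCoeff]
    have hsum : ∑ i : Fin n, μf i = η + ∑ β ∈ Icc 1 (n - 1), lam β := by
      have := e1.symm.trans e2
      linarith
    have hmv : ∑ p ∈ Icc 1 n, mval μf p = ∑ i : Fin n, μf i := by
      rw [sum_Icc_eq]
      exact Finset.sum_congr rfl fun i _ => mval_fin μf i
    rw [etav, hmv, hsum]
    have hvk : v k = η := by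
      rw [hηdef, mval_eq_of v n (by omega) le_rfl]
      congr 1
      exact Fin.ext (by show k.1 = n - 1; omega)
    rw [hvk]
    ring

end surjsec

end AndersonAux

open AndersonAux

/-- Lemma 2.3(a): the map `μ ↦ (ξ, η)` is a bijection from the interlacing domain onto
`{ξ_1 > 0, …, ξ_{n-1} > 0, η ∈ ℝ}`. -/
theorem anderson_bijection
    (n : ℕ) (hn : 1 ≤ n) (lam : ℕ → ℝ)
    (hlam : ∀ α : ℕ, 1 ≤ α → α + 1 ≤ n - 1 → lam α < lam (α + 1)) :
    Set.BijOn (Fmap n lam) (Xi n lam)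
      {v : Fin n → ℝ | ∀ α : ℕ, 1 ≤ α → α ≤ n - 1 → 0 < mval v α} := by
  refine ⟨?_, anderson_injOn hn hlam, ?_⟩
  · -- maps to
    intro μ hμ
    intro α h1 h2
    rw [mval_eq_of _ α h1 (by omega)]
    simp only [Fmap]
    rw [if_pos (by show α - 1 + 1 ≤ n - 1; omega),
      show α - 1 + 1 = α from by omega]
    exact xiv_pos hlam hμ h1 h2
  · -- surjective onto
    intro v hv
    rcases Nat.lt_or_ge n 2 with hn2 | hn2
    · -- n = 1
      have hn1 : n = 1 := by omega
      subst hn1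
      refine ⟨v, fun α h1 h2 => by omega, ?_⟩
      funext k
      simp only [Fmap]
      rw [if_neg (by omega)]
      rw [etav, sum_Icc_eq, Fin.sum_univ_one, mval_fin]
      rw [show (Icc 1 (1 - 1) : Finset ℕ) = ∅ from rfl, Finset.sum_empty, sub_zero]
      exact congrArg v (Subsingleton.elim _ _)
    · obtain ⟨μ, hμ, he⟩ := anderson_surjOn hn2 hlam v hv
      exact ⟨μ, hμ, he⟩
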